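/- Let τ ≤ 1/2 and let p be a predecessor map on {0,…,n−1}. Let w ∈ ℝ^n belong to C_{τ,p} and let u ∈ ℝ^n satisfy w(i) − u(i) ∈ ℤ for all i. Define v ∈ ℝ^n recursively (in increasing order of index, which is well defined since p(i) < i) by v(0) = w(0) and v(i) = u(i) − round(u(i) − v(p(i))) for i ≠ 0. Then v = w. (Correctness of the recovery recursion along a recovery path in the paper's Algorithm 3: applied to the observation u = mod(w,1) with the correct root value, it reproduces the smooth vector w exactly.) -/

import Mathlib

/-- Correctness of the recovery recursion along a recovery
path (the paper's Algorithm 3).  If `w ∈ C_{τ,p}` with `τ ≤ 1/2`,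
`u` agrees with `w` modulo 1, and `v` is defined by `v(0) = w(0)` and
`v(i) = u(i) − round(u(i) − v(p(i)))` for `i ≠ 0`, then `v = w`. -/
theorem recovery_recursion_correct_path
    (n : ℕ) (τ : ℝ) (hτ : τ ≤ 1 / 2)
    (p : ℕ → ℕ) (hp : ∀ i, i < n → i ≠ 0 → p i < i)
    (w u v : ℕ → ℝ)
    (hw : ∀ i, i < n → i ≠ 0 → |w i - w (p i)| < τ)
    (hmod : ∀ i, i < n → ∃ k : ℤ, w i - u i = (k : ℝ))
    (hinit : v 0 = w 0)
    (hrec : ∀ i, i < n → i ≠ 0 → v i = u i - round (u i - v (p i))) :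
    ∀ i, i < n → v i = w i := by
  intro i
  induction i using Nat.strong_induction_on with
  | _ i ih =>
    intro hi
    by_cases h0 : i = 0
    · simpa [h0] using hinit
    · have hpi := hp i hi h0
      have hvp : v (p i) = w (p i) := ih (p i) hpi (hpi.trans hi)
      obtain ⟨k, hk⟩ := hmod i hi
      have habs := hw i hi h0
      have hx : u i - v (p i) = (w i - w (p i)) + (-k : ℤ) := by
        push_cast
        rw [hvp]; linarith
      have hr : round (u i - v (p i)) = (-k : ℤ) := by
        rw [hx, round_add_intCast, round_eq_zero_iff.2, zero_add]
        have := abs_lt.1 habs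
        exact ⟨by linarith [this.1], by linarith [this.2]⟩
      rw [hrec i hi h0, hr]
      push_cast
      linarith
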